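/- Every POP-graph satisfies condition (A); that is, if (G, ≺) is a progressive graph with a planar order ≺, then for all distinct vertices v1, v2 of G: ∅ ≠ Ī(v1) ⊆ Ī(v2) implies v1 → v2, and ∅ ≠ Ō(v1) ⊆ Ō(v2) implies v2 → v1. -/

import Mathlib

variable {V E : Type}

/-- Edge reachability `e1 → e2`: a directed path of edges `f_0, …, f_k` with `k ≥ 1`,
`f_0 = e1`, `f_k = e2` and `t f_{i-1} = s f_i`. -/
def eReach (s t : E → V) : E → E → Prop :=
  Relation.TransGen (fun a b => t a = s b)

/-- Vertex reachability `v → w`: a directed path from `v` to `w` using at least one edge. -/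
def vReach (s t : E → V) : V → V → Prop :=
  Relation.TransGen (fun v w => ∃ e, s e = v ∧ t e = w)

/-- A directed graph is acyclic if no vertex reaches itself. -/
def Acyclic (s t : E → V) : Prop := ∀ v, ¬ vReach s t v v

/-- `I(v)`: incoming edges of `v`. -/
def inE (t : E → V) (v : V) : Set E := {e | t e = v}

/-- `O(v)`: outgoing edges of `v`. -/
def outE (s : E → V) (v : V) : Set E := {e | s e = v}

/-- Convex hull `X̄` of `X` in the linear order `le`: the interval `{y | X^- ≤ y ≤ X^+}`
(empty when `X` is empty). -/
def hull (le : E → E → Prop) (X : Set E) : Set E :=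
  {y | ∃ a ∈ X, ∃ b ∈ X, le a y ∧ le y b}

/-- The strict order associated to a linear order `le`. -/
def ltOf (le : E → E → Prop) (a b : E) : Prop := le a b ∧ a ≠ b

/-- A source: no incoming edges. -/
def IsSource (t : E → V) (v : V) : Prop := inE t v = ∅

/-- A sink: no outgoing edges. -/
def IsSink (s : E → V) (v : V) : Prop := outE s v = ∅

/-- A progressive graph: acyclic and every source and every sink has degree 1. -/
def Progressive (s t : E → V) : Prop :=
  Acyclic s t ∧
  ∀ v, (IsSource t v ∨ IsSink s v) → ({e | s e = v ∨ t e = v} : Set E).ncard = 1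

/-- `I(G)`: input edges, those whose source vertex is a source of `G`. -/
def inputE (s t : E → V) : Set E := {e | IsSource t (s e)}

/-- `O(G)`: output edges, those whose target vertex is a sink of `G`. -/
def outputE (s t : E → V) : Set E := {e | IsSink s (t e)}

/-- Condition (U1) = (P1): `e1 → e2` implies `e1 ≺ e2`. -/
def U1 (s t : E → V) (le : E → E → Prop) : Prop :=
  ∀ e1 e2, eReach s t e1 e2 → ltOf le e1 e2

/-- Condition (U2): for every vertex `v`, `Ī(v) ∩ Ō(v) = ∅` and `Ē(v) = Ī(v) ∪ Ō(v)`. -/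
def U2 (s t : E → V) (le : E → E → Prop) : Prop :=
  ∀ v, hull le (inE t v) ∩ hull le (outE s v) = ∅ ∧
    hull le (inE t v ∪ outE s v) = hull le (inE t v) ∪ hull le (outE s v)

/-- Condition (U3). -/
def U3 (s t : E → V) (le : E → E → Prop) : Prop :=
  ∀ v1 v2,
    ((inE t v1 ∩ hull le (inE t v2)).Nonempty →
      hull le (inE t v1) ⊆ hull le (inE t v2)) ∧
    ((outE s v1 ∩ hull le (outE s v2)).Nonempty →
      hull le (outE s v1) ⊆ hull le (outE s v2))

/-- Condition (U4): for every progressive vertex `v`, `I(G) ∩ Ō(v) = ∅` and `O(G) ∩ Ī(v) = ∅`. -/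
def U4 (s t : E → V) (le : E → E → Prop) : Prop :=
  ∀ v, ¬ IsSource t v → ¬ IsSink s v →
    inputE s t ∩ hull le (outE s v) = ∅ ∧ outputE s t ∩ hull le (inE t v) = ∅

/-- An upward planar order: a linear order on the edges satisfying (U1), (U2), (U3). -/
def IsUPO (s t : E → V) (le : E → E → Prop) : Prop :=
  IsLinearOrder E le ∧ U1 s t le ∧ U2 s t le ∧ U3 s t le

/-- Condition (P2). -/
def P2 (s t : E → V) (le : E → E → Prop) : Prop :=
  ∀ e1 e2 e3, ltOf le e1 e2 → ltOf le e2 e3 → eReach s t e1 e3 →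
    eReach s t e1 e2 ∨ eReach s t e2 e3

/-- Condition (P̃2). -/
def P2t (s t : E → V) (le : E → E → Prop) : Prop :=
  ∀ e1 e2 e3, ltOf le e1 e2 → ltOf le e2 e3 → t e1 = s e3 →
    eReach s t e1 e2 ∨ eReach s t e2 e3

/-- Condition (P3) (for distinct vertices). -/
def P3 (s t : E → V) (le : E → E → Prop) : Prop :=
  ∀ v1 v2, v1 ≠ v2 →
    ((inE t v1 ∩ hull le (inE t v2)).Nonempty → vReach s t v1 v2) ∧
    ((outE s v1 ∩ hull le (outE s v2)).Nonempty → vReach s t v2 v1)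

/-- Condition (A): for distinct `v1 v2`, `∅ ≠ Ī(v1) ⊆ Ī(v2)` implies `v1 → v2`,
and `∅ ≠ Ō(v1) ⊆ Ō(v2)` implies `v2 → v1`. -/
def CondA (s t : E → V) (le : E → E → Prop) : Prop :=
  ∀ v1 v2, v1 ≠ v2 →
    ((hull le (inE t v1)).Nonempty → hull le (inE t v1) ⊆ hull le (inE t v2) →
      vReach s t v1 v2) ∧
    ((hull le (outE s v1)).Nonempty → hull le (outE s v1) ⊆ hull le (outE s v2) →
      vReach s t v2 v1)

/-- A POP-graph: a progressive graph with a planar order ((P1) and (P2)). -/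
def IsPOP (s t : E → V) (le : E → E → Prop) : Prop :=
  Progressive s t ∧ IsLinearOrder E le ∧ U1 s t le ∧ P2 s t le

/-- `U(v) = {w | Ō(v) ⊊ Ō(w)}` when `O(v) ≠ ∅`, and `U(v) = ∅` otherwise. -/
def Uset (s : E → V) (le : E → E → Prop) (v : V) : Set V :=
  {w | (outE s v).Nonempty ∧ hull le (outE s v) ⊂ hull le (outE s w)}

/-- `D(v) = {w | Ī(v) ⊊ Ī(w)}` when `I(v) ≠ ∅`, and `D(v) = ∅` otherwise. -/
def Dset (t : E → V) (le : E → E → Prop) (v : V) : Set V :=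
  {w | (inE t v).Nonempty ∧ hull le (inE t v) ⊂ hull le (inE t w)}

/-- A CPP-extension of `G = (s, t)`: a POP-graph `(s', t', le')` with an embedding
`(φ0, φ1)` satisfying (E1)–(E4). -/
def IsCPP {V' E' : Type} (s t : E → V) (s' t' : E' → V')
    (le' : E' → E' → Prop) (φ0 : V → V') (φ1 : E → E') : Prop :=
  Function.Injective φ0 ∧ Function.Injective φ1 ∧
  (∀ e, s' (φ1 e) = φ0 (s e)) ∧ (∀ e, t' (φ1 e) = φ0 (t e)) ∧
  IsPOP s' t' le' ∧
  -- (E1)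
  Set.range φ0 = {v : V' | ¬ IsSource t' v ∧ ¬ IsSink s' v} ∧
  -- (E2)
  Nat.card E' = Nat.card E + ({v : V | IsSource t v}).ncard + ({v : V | IsSink s v}).ncard ∧
  -- (E3)
  (∀ v w, IsSource t v → IsSink s w → inE t' (φ0 v) ∩ outE s' (φ0 w) = ∅) ∧
  -- (E4)
  (∀ e' : E', e' ∉ Set.range φ1 → e' ∉ inputE s' t' → e' ∉ outputE s' t' →
    ((∃ a ∈ outE s' (s' e'), ltOf le' a e') ∧ (∃ b ∈ outE s' (s' e'), ltOf le' e' b)) ∨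
    ((∃ a ∈ inE t' (t' e'), ltOf le' a e') ∧ (∃ b ∈ inE t' (t' e'), ltOf le' e' b)))
/-- Aux: edge reachability gives vertex reachability between targets. -/
lemma eReach_vReach_tt (s t : E → V) {x y : E} (h : eReach s t x y) :
    vReach s t (t x) (t y) := by
  induction h using Relation.TransGen.head_induction_on with
  | single h => exact Relation.TransGen.single ⟨y, h.symm, rfl⟩
  | head h _ ihp => exact Relation.TransGen.head ⟨_, h.symm, rfl⟩ ihp

/-- Aux: edge reachability gives vertex reachability between sources. -/
lemma eReach_vReach_ss (s t : E → V) {x y : E} (h : eReach s t x y) :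
    vReach s t (s x) (s y) := by
  induction h using Relation.TransGen.head_induction_on with
  | single h => exact Relation.TransGen.single ⟨_, rfl, h⟩
  | head h _ ihp => exact Relation.TransGen.head ⟨_, rfl, h⟩ ihp

/-- Aux: edge reachability relates target of the first to source of the last. -/
lemma eReach_vReach_ts (s t : E → V) {x y : E} (h : eReach s t x y) :
    t x = s y ∨ vReach s t (t x) (s y) := by
  induction h using Relation.TransGen.head_induction_on with
  | single h => exact Or.inl h
  | head h _ ihp =>
    rcases ihp with h' | h'
    · exact Or.inr (Relation.TransGen.single ⟨_, h.symm, h'⟩)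
    · exact Or.inr (Relation.TransGen.head ⟨_, h.symm, rfl⟩ h')

/-- Aux: a vertex path yields a first edge out of `v` and a last edge into `w`. -/
lemma vReach_edges (s t : E → V) {v w : V} (h : vReach s t v w) :
    ∃ g h', s g = v ∧ t h' = w ∧ (g = h' ∨ eReach s t g h') := by
  induction h using Relation.TransGen.head_induction_on with
  | single h =>
    obtain ⟨e, he1, he2⟩ := h
    exact ⟨e, e, he1, he2, Or.inl rfl⟩
  | head h _ ihp =>
    obtain ⟨e, he1, he2⟩ := h
    obtain ⟨g, h', hg, hh', hor⟩ := ihp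
    refine ⟨e, h', he1, hh', Or.inr ?_⟩
    have h1 : eReach s t e g := Relation.TransGen.single (he2.trans hg.symm)
    rcases hor with rfl | h2
    · exact h1
    · exact h1.trans h2

/-- Aux: a set is contained in its hull (for reflexive `le`). -/
lemma subset_hull (le : E → E → Prop) (hrefl : ∀ x, le x x) (X : Set E) :
    X ⊆ hull le X := fun x hx => ⟨x, hx, x, hx, hrefl x, hrefl x⟩

/-- every POP-graph satisfies condition (A). -/
theorem pop_satisfies_A {V E : Type} [Fintype V] [Fintype E]
    (s t : E → V) (le : E → E → Prop) (hPOP : IsPOP s t le) :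
    CondA s t le := by
  obtain ⟨⟨hAcyc, hDeg⟩, hLin, hU1, hP2⟩ := hPOP
  have hrefl : ∀ x, le x x := fun x => hLin.toIsPartialOrder.toIsPreorder.toRefl.refl x
  have htrans : ∀ {a b c}, le a b → le b c → le a c :=
    fun h1 h2 => hLin.toIsPartialOrder.toIsPreorder.toIsTrans.trans _ _ _ h1 h2
  have hanti : ∀ {a b}, le a b → le b a → a = b :=
    fun h1 h2 => hLin.toIsPartialOrder.toAntisymm.antisymm _ _ h1 h2
  intro v1 v2 hne
  constructor
  · -- in-edge case
    rintro ⟨y, e1, he1, _⟩ hsub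
    -- e1 ∈ I(v1)
    have he1v : t e1 = v1 := he1
    have he1h : e1 ∈ hull le (inE t v2) :=
      hsub (subset_hull le hrefl _ he1)
    obtain ⟨a, ha, b, hb, hae, heb⟩ := he1h
    have hane : a ≠ e1 := by rintro rfl; exact hne (he1v ▸ ha.symm ▸ rfl)
    have hbne : e1 ≠ b := by rintro rfl; exact hne (he1v ▸ hb.symm ▸ rfl)
    have habne : a ≠ b := by
      rintro rfl; exact hane (hanti hae heb)
    -- v2 is not a sink
    have hnsink : ¬ IsSink s v2 := by
      intro hsink
      have h1 : a ∈ ({e | s e = v2 ∨ t e = v2} : Set E) := Or.inr ha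
      have h2 : b ∈ ({e | s e = v2 ∨ t e = v2} : Set E) := Or.inr hb
      have hcard := hDeg v2 (Or.inr hsink)
      have : 1 < ({e | s e = v2 ∨ t e = v2} : Set E).ncard :=
        (Set.one_lt_ncard (Set.toFinite _)).2 ⟨a, h1, b, h2, habne⟩
      omega
    obtain ⟨c, hc⟩ : (outE s v2).Nonempty := by
      rw [Set.nonempty_iff_ne_empty]; exact hnsink
    have hcv : s c = v2 := hc
    have hac : eReach s t a c := Relation.TransGen.single (ha.trans hcv.symm)
    have hbc : eReach s t b c := Relation.TransGen.single (hb.trans hcv.symm)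
    have hbclt : ltOf le b c := hU1 _ _ hbc
    have he1c : ltOf le e1 c := by
      refine ⟨htrans heb hbclt.1, ?_⟩
      rintro rfl
      exact hbne (hanti heb hbclt.1)
    rcases hP2 a e1 c ⟨hae, hane⟩ he1c hac with h | h
    · -- eReach a e1 : gives v2 → v1, contradiction
      exfalso
      have hv21 : vReach s t v2 v1 := by
        have := eReach_vReach_tt s t h
        rwa [ha, he1v] at this
      obtain ⟨g, h', hg, hh', hor⟩ := vReach_edges s t hv21
      -- h' ∈ I(v1) ⊆ hull I(v2)
      have : h' ∈ hull le (inE t v2) := hsub (subset_hull le hrefl _ hh')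
      obtain ⟨_, _, b', hb', _, hhb'⟩ := this
      have hb'g : ltOf le b' g :=
        hU1 _ _ (Relation.TransGen.single ((hb' : t b' = v2).trans hg.symm))
      have hgh' : le g h' := by
        rcases hor with rfl | h2
        · exact hrefl g
        · exact (hU1 _ _ h2).1
      exact hb'g.2 (hanti hb'g.1 (htrans hgh' hhb'))
    · -- eReach e1 c : gives v1 → v2
      rcases eReach_vReach_ts s t h with h' | h'
      · exact absurd (he1v ▸ hcv ▸ h') hne
      · rwa [he1v, hcv] at h'
  · -- out-edge case
    rintro ⟨y, e1, he1, _⟩ hsub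
    have he1v : s e1 = v1 := he1
    have he1h : e1 ∈ hull le (outE s v2) :=
      hsub (subset_hull le hrefl _ he1)
    obtain ⟨a, ha, b, hb, hae, heb⟩ := he1h
    have hane : a ≠ e1 := by rintro rfl; exact hne (he1v ▸ ha.symm ▸ rfl)
    have hbne : e1 ≠ b := by rintro rfl; exact hne (he1v ▸ hb.symm ▸ rfl)
    have habne : a ≠ b := by rintro rfl; exact hane (hanti hae heb)
    -- v2 is not a source
    have hnsrc : ¬ IsSource t v2 := by
      intro hsrc
      have h1 : a ∈ ({e | s e = v2 ∨ t e = v2} : Set E) := Or.inl ha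
      have h2 : b ∈ ({e | s e = v2 ∨ t e = v2} : Set E) := Or.inl hb
      have hcard := hDeg v2 (Or.inl hsrc)
      have : 1 < ({e | s e = v2 ∨ t e = v2} : Set E).ncard :=
        (Set.one_lt_ncard (Set.toFinite _)).2 ⟨a, h1, b, h2, habne⟩
      omega
    obtain ⟨c, hc⟩ : (inE t v2).Nonempty := by
      rw [Set.nonempty_iff_ne_empty]; exact hnsrc
    have hcv : t c = v2 := hc
    have hca : eReach s t c a := Relation.TransGen.single (hcv.trans (ha : s a = v2).symm)
    have hcb : eReach s t c b := Relation.TransGen.single (hcv.trans (hb : s b = v2).symm)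
    have hcalt : ltOf le c a := hU1 _ _ hca
    have hce1 : ltOf le c e1 := by
      refine ⟨htrans hcalt.1 hae, ?_⟩
      rintro rfl
      exact hane (hanti hae hcalt.1)
    rcases hP2 c e1 b hce1 ⟨heb, hbne⟩ hcb with h | h
    · -- eReach c e1 : gives v2 → v1
      rcases eReach_vReach_ts s t h with h' | h'
      · exact absurd (hcv.symm.trans (h'.trans he1v)) hne.symm
      · rwa [hcv, he1v] at h'
    · -- eReach e1 b : gives v1 → v2, contradiction
      exfalso
      have hv12 : vReach s t v1 v2 := by
        have := eReach_vReach_ss s t h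
        rwa [he1v, (hb : s b = v2)] at this
      obtain ⟨g, h', hg, hh', hor⟩ := vReach_edges s t hv12
      -- g ∈ O(v1) ⊆ hull O(v2)
      have : g ∈ hull le (outE s v2) := hsub (subset_hull le hrefl _ hg)
      obtain ⟨a', ha', _, _, ha'g, _⟩ := this
      have hh'a' : ltOf le h' a' :=
        hU1 _ _ (Relation.TransGen.single ((hh' : t h' = v2).trans (ha' : s a' = v2).symm))
      have hgh' : le g h' := by
        rcases hor with rfl | h2
        · exact hrefl g
        · exact (hU1 _ _ h2).1
      exact hh'a'.2 (hanti hh'a'.1 (htrans ha'g hgh'))
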